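/- arXiv:2106.08396 — 6 statements merged into one kernel-verified Lean document; each statement's English description precedes it below -/
import Mathlib

section
/- Let k ≥ 1 be an integer and for i = 0,…,k define a_i = (−1)^i · C(k,i) / (2^{k−1} · (k+i)), where C(k,i) denotes the binomial coefficient. Then for every integer r with 1 ≤ r ≤ k, the weighted power sum vanishes: ∑_{i=0}^{k} a_i · (k+i)^r = 0. -/
open Finset Function fwdDiff

/-- The k-th forward difference of a polynomial of degree `m < K` vanishes. -/
lemma fwdDiff_iter_pow_eq_zero (c : ℝ) :
    ∀ m K : ℕ, m < K → (fwdDiff (1:ℕ))^[K] (fun n : ℕ => ((n : ℝ) + c) ^ m) = 0 := by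
  intro m
  induction m using Nat.strong_induction_on with
  | _ m IH =>
    intro K hmK
    obtain ⟨K', rfl⟩ : ∃ K', K = K' + 1 := ⟨K - 1, by omega⟩
    rw [Function.iterate_succ_apply]
    have hd : fwdDiff (1:ℕ) (fun n : ℕ => ((n : ℝ) + c) ^ m)
        = fun n : ℕ => ∑ j ∈ range m, ((n : ℝ) + c) ^ j * (m.choose j) := by
      funext n
      have hb : ((n : ℝ) + 1 + c) ^ m = ∑ j ∈ range (m + 1), ((n : ℝ) + c) ^ j * (m.choose j) := by
        have := add_pow ((n : ℝ) + c) 1 m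
        simpa [one_pow, add_comm, add_left_comm, add_assoc] using this
      simp only [fwdDiff, Nat.cast_add, Nat.cast_one]
      rw [hb, Finset.sum_range_succ]
      simp
    rw [hd]
    have : (fun n : ℕ => ∑ j ∈ range m, ((n : ℝ) + c) ^ j * (m.choose j))
        = ∑ j ∈ range m, (m.choose j : ℝ) • (fun n : ℕ => ((n : ℝ) + c) ^ j) := by
      funext n; simp [mul_comm]
    rw [this, fwdDiff_iter_finset_sum]
    apply Finset.sum_eq_zero
    intro j hj
    have hjm := Finset.mem_range.mp hj
    rw [fwdDiff_iter_const_smul, IH j hjm K' (by omega), smul_zero]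

/-- Moment-matching: for `a i = (-1)^i * C(k,i) / (2^(k-1) * (k+i))` and `1 ≤ r ≤ k`,
the weighted power sum `∑_{i=0}^k a i * (k+i)^r` vanishes. -/
theorem weighted_power_sum_vanishes (k : ℕ) (hk : 1 ≤ k) (r : ℕ) (hr1 : 1 ≤ r) (hrk : r ≤ k) :
    ∑ i ∈ Finset.range (k + 1),
      ((-1 : ℝ) ^ i * (k.choose i) / (2 ^ (k - 1) * (k + i))) * ((k : ℝ) + i) ^ r = 0 := by
  obtain ⟨m, rfl⟩ : ∃ m, r = m + 1 := ⟨r - 1, by omega⟩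
  set f : ℕ → ℝ := fun n : ℕ => ((n : ℝ) + k) ^ m with hf
  have hzero : (fwdDiff (1:ℕ))^[k] f 0 = 0 := by
    rw [fwdDiff_iter_pow_eq_zero (k : ℝ) m k (by omega)]; rfl
  have hexp := fwdDiff_iter_eq_sum_shift (1 : ℕ) f k 0
  rw [hzero] at hexp
  have key : ∑ i ∈ Finset.range (k + 1),
      ((-1 : ℝ) ^ i * (k.choose i)) * ((k : ℝ) + i) ^ m = 0 := by
    have h2 : ∑ i ∈ Finset.range (k + 1),
        ((-1 : ℝ) ^ (k - i) * (k.choose i)) * ((k : ℝ) + i) ^ m = 0 := by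
      have := hexp.symm
      simpa [f, zsmul_eq_mul, add_comm, mul_comm, mul_assoc, mul_left_comm] using this
    have := congrArg (fun x : ℝ => (-1 : ℝ) ^ k * x) h2
    simp only [mul_zero, Finset.mul_sum] at this
    rw [← this]
    apply Finset.sum_congr rfl
    intro i hi
    have hik : i ≤ k := by simpa using Nat.lt_succ_iff.mp (Finset.mem_range.mp hi)
    have hpow : (-1 : ℝ) ^ k * (-1 : ℝ) ^ (k - i) = (-1 : ℝ) ^ i := by
      rw [← pow_add]
      have : k + (k - i) = 2 * (k - i) + i := by omega
      rw [this, pow_add, pow_mul]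
      simp
    calc ((-1 : ℝ) ^ i * (k.choose i)) * ((k : ℝ) + i) ^ m
        = ((-1 : ℝ) ^ k * (-1 : ℝ) ^ (k - i) * (k.choose i)) * ((k : ℝ) + i) ^ m := by rw [hpow]
      _ = (-1 : ℝ) ^ k * (((-1 : ℝ) ^ (k - i) * (k.choose i)) * ((k : ℝ) + i) ^ m) := by ring
  have hterm : ∀ i ∈ Finset.range (k + 1),
      ((-1 : ℝ) ^ i * (k.choose i) / (2 ^ (k - 1) * (k + i))) * ((k : ℝ) + i) ^ (m + 1)
      = (1 / 2 ^ (k - 1)) * (((-1 : ℝ) ^ i * (k.choose i)) * ((k : ℝ) + i) ^ m) := by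
    intro i hi
    have hki : ((k : ℝ) + i) ≠ 0 := by positivity
    have h2 : (2 : ℝ) ^ (k - 1) ≠ 0 := by positivity
    field_simp
    ring
  rw [Finset.sum_congr rfl hterm, ← Finset.mul_sum, key, mul_zero]
end

section
/- Let k ≥ 1 be an integer, for i = 0,…,k define a_i = (−1)^i · C(k,i) / (2^{k−1} · (k+i)), and define ε_k = 1 / (k · 2^{k−1} · C(2k,k)). Then ∑_{i=0}^{k} a_i = ε_k. -/
open Nat Finset

lemma fact_mul_prod (m : ℕ) : ∀ n : ℕ, m ! * ∏ j ∈ range n, (m + 1 + j) = (m + n)!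
  | 0 => by simp
  | n + 1 => by
    rw [prod_range_succ, ← mul_assoc, fact_mul_prod m n, ← Nat.add_assoc]
    rw [Nat.factorial_succ (m + n)]
    ring

lemma prod_eq (k : ℕ) (hk : 1 ≤ k) :
    k * (2 * k).choose k * k ! = ∏ j ∈ range (k + 1), (k + j) := by
  have h1 : ∏ j ∈ range (k + 1), (k + j) = (∏ j ∈ range k, (k + 1 + j)) * k := by
    rw [prod_range_succ']
    simp [Nat.add_comm, Nat.add_assoc, Nat.add_left_comm]
  have h2 := fact_mul_prod k k
  have h3 := Nat.choose_mul_factorial_mul_factorial (show k ≤ 2 * k by omega)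
  rw [show 2 * k - k = k by omega] at h3
  obtain ⟨m, rfl⟩ := Nat.exists_eq_add_of_le hk
  have hfact : (1 + m)! = (1 + m) * m ! := by
    rw [Nat.add_comm 1 m, Nat.factorial_succ]
  apply Nat.eq_of_mul_eq_mul_left (Nat.factorial_pos m)
  calc m ! * ((1 + m) * (2 * (1 + m)).choose (1 + m) * (1 + m)!)
      = (2 * (1 + m)).choose (1 + m) * (1 + m)! * ((1 + m) * m !) := by ring
    _ = (2 * (1 + m)).choose (1 + m) * (1 + m)! * (1 + m)! := by rw [← hfact]
    _ = (2 * (1 + m))! := h3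
    _ = ((1 + m) + (1 + m))! := by ring_nf
    _ = (1 + m)! * ∏ j ∈ range (1 + m), ((1 + m) + 1 + j) := (fact_mul_prod (1 + m) (1 + m)).symm
    _ = m ! * ((1 + m) * ∏ j ∈ range (1 + m), ((1 + m) + 1 + j)) := by rw [hfact]; ring
    _ = m ! * ∏ j ∈ range (1 + m + 1), ((1 + m) + j) := by rw [h1]; ring

lemma key : ∀ k : ℕ, ∀ x : ℝ, 0 < x →
    ∑ i ∈ range (k + 1), (-1 : ℝ) ^ i * (k.choose i) / (x + i) =
      (k ! : ℝ) / ∏ j ∈ range (k + 1), (x + j)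
  | 0 => by intro x hx; simp
  | k + 1 => by
    intro x hx
    have hx1 : (0:ℝ) < x + 1 := by linarith
    have IH1 := key k x hx
    have IH2 := key k (x + 1) hx1
    -- rewrite LHS as S(k,x) - S(k,x+1)
    have hsplit : ∑ i ∈ range (k + 2), (-1 : ℝ) ^ i * ((k+1).choose i) / (x + i) =
        (∑ i ∈ range (k + 1), (-1 : ℝ) ^ i * (k.choose i) / (x + i)) -
        ∑ i ∈ range (k + 1), (-1 : ℝ) ^ i * (k.choose i) / ((x + 1) + i) := by
      rw [Finset.sum_range_succ' (fun i => (-1 : ℝ) ^ i * ((k+1).choose i) / (x + i)) (k+1)]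
      rw [Finset.sum_range_succ' (fun i => (-1 : ℝ) ^ i * (k.choose i) / (x + i)) k]
      push_cast
      have hrw : ∀ i ∈ range (k + 1),
          (-1 : ℝ) ^ (i+1) * ((k+1).choose (i+1)) / (x + (i+1)) =
          (-1 : ℝ) ^ (i+1) * (k.choose i) / ((x+1) + i)
          + (-1 : ℝ) ^ (i+1) * (k.choose (i+1)) / (x + (i+1)) := by
        intro i _
        rw [Nat.choose_succ_succ, Nat.cast_add]
        ring
      rw [Finset.sum_congr rfl hrw, Finset.sum_add_distrib]
      have hlast : ∑ i ∈ range (k + 1), (-1 : ℝ) ^ (i+1) * (k.choose (i+1)) / (x + (i+1))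
          = ∑ i ∈ range k, (-1 : ℝ) ^ (i+1) * (k.choose (i+1)) / (x + (i+1)) := by
        rw [Finset.sum_range_succ, Nat.choose_succ_self]
        simp
      rw [hlast]
      have hneg : ∑ i ∈ range (k + 1), (-1 : ℝ) ^ (i+1) * (k.choose i) / ((x+1) + i)
          = - ∑ i ∈ range (k + 1), (-1 : ℝ) ^ i * (k.choose i) / ((x+1) + i) := by
        rw [← Finset.sum_neg_distrib]
        apply Finset.sum_congr rfl
        intro i _
        ring
      rw [hneg]
      simp only [Nat.choose_zero_right, Nat.cast_one]
      ring
    rw [hsplit, IH1, IH2]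
    -- now the product identity
    have hP1 : ∏ j ∈ range (k + 2), (x + j) = (∏ j ∈ range (k + 1), (x + j)) * (x + (k+1)) := by
      rw [Finset.prod_range_succ]; push_cast; ring
    have hP2 : ∏ j ∈ range (k + 2), (x + j) = (∏ j ∈ range (k + 1), ((x+1) + j)) * x := by
      rw [Finset.prod_range_succ' (fun j => x + (j:ℝ)) (k+1)]
      push_cast
      simp [add_assoc, add_comm, add_left_comm]
    have hpos1 : (0:ℝ) < ∏ j ∈ range (k + 1), (x + j) :=
      Finset.prod_pos (fun j _ => by positivity)
    have hpos2 : (0:ℝ) < ∏ j ∈ range (k + 1), ((x+1) + j) :=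
      Finset.prod_pos (fun j _ => by positivity)
    have hposF : (0:ℝ) < ∏ j ∈ range (k + 2), (x + j) :=
      Finset.prod_pos (fun j _ => by positivity)
    rw [div_sub_div _ _ (ne_of_gt hpos1) (ne_of_gt hpos2), div_eq_div_iff (by positivity) (ne_of_gt hposF)]
    push_cast [Nat.factorial_succ]
    rw [hP1] at hP2 ⊢
    linear_combination (-((k ! : ℝ) * ∏ j ∈ range (k+1), (x + (j:ℝ)))) * hP2

/-- For `a i = (-1)^i * C(k,i) / (2^(k-1) * (k+i))` one has
`∑_{i=0}^k a i = 1 / (k * 2^(k-1) * C(2k,k))`. -/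
theorem sum_a_eq_eps (k : ℕ) (hk : 1 ≤ k) :
    ∑ i ∈ Finset.range (k + 1),
      (-1 : ℝ) ^ i * (k.choose i) / (2 ^ (k - 1) * (k + i)) =
      1 / (k * 2 ^ (k - 1) * ((2 * k).choose k)) := by
  have hkpos : (0:ℝ) < k := by exact_mod_cast hk
  have h := key k k hkpos
  have hprod : (∏ j ∈ range (k + 1), ((k:ℝ) + j)) = ((k * (2*k).choose k * k ! : ℕ) : ℝ) := by
    rw [prod_eq k hk]
    push_cast
    rfl
  rw [hprod] at h
  have hfac : (0:ℝ) < (k ! : ℝ) := by exact_mod_cast k.factorial_pos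
  have hch : (0:ℝ) < ((2*k).choose k : ℝ) := by
    exact_mod_cast Nat.choose_pos (show k ≤ 2*k by omega)
  have h2 : (0:ℝ) < (2:ℝ) ^ (k-1) := by positivity
  calc ∑ i ∈ Finset.range (k + 1), (-1 : ℝ) ^ i * (k.choose i) / (2 ^ (k - 1) * (k + i))
      = (1 / 2 ^ (k-1)) * ∑ i ∈ Finset.range (k + 1), (-1 : ℝ) ^ i * (k.choose i) / (k + i) := by
        rw [Finset.mul_sum]
        apply Finset.sum_congr rfl
        intro i _
        field_simp
    _ = (1 / 2 ^ (k-1)) * ((k ! : ℝ) / ((k * (2*k).choose k * k ! : ℕ) : ℝ)) := by rw [h]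
    _ = 1 / (k * 2 ^ (k - 1) * ((2 * k).choose k)) := by
        push_cast
        field_simp
end

section
/- Let b > 1 be a real number, L ≥ 1 an integer, T_L the degree-L Chebyshev polynomial of the first kind with real coefficients, and define the real polynomial P_L(x) = −T_L((2x−(b²+1))/(b²−1)) / T_L(−(b²+1)/(b²−1)) (the denominator is nonzero). Then P_L(0) = −1, and for every real x with 1 ≤ x ≤ b² one has |P_L(x)| ≤ ε, where ε = |T_L(−(b²+1)/(b²−1))|^{−1} ≤ 2·((b−1)/(b+1))^L. -/
open Polynomial Polynomial.Chebyshev Real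

lemma T_eval_neg_cosh (n : ℤ) (t : ℝ) :
    (T ℝ n).eval (-Real.cosh t) = Real.cos (n * π) * Real.cosh (n * t) := by
  have h1 : (((T ℝ n).eval (-Real.cosh t) : ℝ) : ℂ) = (T ℂ n).eval ((-Real.cosh t : ℝ) : ℂ) :=
    complex_ofReal_eval_T _ n
  have h2 : ((-Real.cosh t : ℝ) : ℂ) = Complex.cos ((π : ℂ) + (t : ℂ) * Complex.I) := by
    rw [Complex.cos_add, Complex.cos_mul_I, Complex.sin_mul_I]
    simp [Complex.ofReal_cosh]
  have h3 : (T ℂ n).eval (Complex.cos ((π : ℂ) + (t : ℂ) * Complex.I))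
      = Complex.cos ((n : ℂ) * ((π : ℂ) + (t : ℂ) * Complex.I)) := T_complex_cos _ n
  have h4 : Complex.cos ((n : ℂ) * ((π : ℂ) + (t : ℂ) * Complex.I))
      = Complex.cos ((n : ℂ) * π) * Complex.cosh ((n : ℂ) * t) := by
    have : (n : ℂ) * ((π : ℂ) + (t : ℂ) * Complex.I) = (n : ℂ) * π + ((n : ℂ) * t) * Complex.I := by
      ring
    rw [this, Complex.cos_add, Complex.cos_mul_I, Complex.sin_mul_I, Complex.sin_int_mul_pi]
    ring
  have h5 : (((T ℝ n).eval (-Real.cosh t) : ℝ) : ℂ)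
      = ((Real.cos (n * π) * Real.cosh (n * t) : ℝ) : ℂ) := by
    rw [h1, h2, h3, h4]
    push_cast
    ring
  exact_mod_cast h5

lemma abs_T_le_one {s : ℝ} (hs1 : -1 ≤ s) (hs2 : s ≤ 1) (n : ℤ) :
    |(T ℝ n).eval s| ≤ 1 := by
  have : s = Real.cos (Real.arccos s) := (Real.cos_arccos hs1 hs2).symm
  rw [this, T_real_cos]
  exact Real.abs_cos_le_one _

/-- Properties of the shifted and scaled Chebyshev polynomial
`P_L(x) = -T_L((2x-(b²+1))/(b²-1)) / T_L(-(b²+1)/(b²-1))`: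
the denominator is nonzero, `P_L(0) = -1`, `|P_L(x)| ≤ ε` for `1 ≤ x ≤ b²`, and
`ε = |T_L(-(b²+1)/(b²-1))|⁻¹ ≤ 2·((b-1)/(b+1))^L`. -/
theorem shifted_chebyshev_properties (L : ℕ) (hL : 1 ≤ L) (b : ℝ) (hb : 1 < b) :
    (Polynomial.Chebyshev.T ℝ L).eval (-(b ^ 2 + 1) / (b ^ 2 - 1)) ≠ 0 ∧
    (-(Polynomial.Chebyshev.T ℝ L).eval ((2 * 0 - (b ^ 2 + 1)) / (b ^ 2 - 1)) /
        (Polynomial.Chebyshev.T ℝ L).eval (-(b ^ 2 + 1) / (b ^ 2 - 1)) = -1) ∧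
    (∀ x : ℝ, 1 ≤ x → x ≤ b ^ 2 →
      |-(Polynomial.Chebyshev.T ℝ L).eval ((2 * x - (b ^ 2 + 1)) / (b ^ 2 - 1)) /
          (Polynomial.Chebyshev.T ℝ L).eval (-(b ^ 2 + 1) / (b ^ 2 - 1))| ≤
        |(Polynomial.Chebyshev.T ℝ L).eval (-(b ^ 2 + 1) / (b ^ 2 - 1))|⁻¹) ∧
    |(Polynomial.Chebyshev.T ℝ L).eval (-(b ^ 2 + 1) / (b ^ 2 - 1))|⁻¹ ≤
      2 * ((b - 1) / (b + 1)) ^ L := by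
  have hb0 : 0 < b - 1 := by linarith
  have hb1 : 0 < b + 1 := by linarith
  have hbsq : 0 < b ^ 2 - 1 := by nlinarith
  set u : ℝ := Real.log ((b + 1) / (b - 1)) with hu
  have hr : (0:ℝ) < (b + 1) / (b - 1) := by positivity
  have heu : Real.exp u = (b + 1) / (b - 1) := Real.exp_log hr
  have henu : Real.exp (-u) = (b - 1) / (b + 1) := by
    rw [Real.exp_neg, heu]
    field_simp
  have hcosh : Real.cosh u = (b ^ 2 + 1) / (b ^ 2 - 1) := by
    rw [Real.cosh_eq, heu, henu]
    field_simp
    ring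
  have harg : -(b ^ 2 + 1) / (b ^ 2 - 1) = -Real.cosh u := by
    rw [hcosh]; ring
  set D : ℝ := (Polynomial.Chebyshev.T ℝ L).eval (-(b ^ 2 + 1) / (b ^ 2 - 1)) with hD
  have hDval : D = Real.cos ((L : ℤ) * π) * Real.cosh ((L : ℤ) * u) := by
    rw [hD, harg, T_eval_neg_cosh]
  have habsD : |D| = Real.cosh ((L : ℤ) * u) := by
    rw [hDval, abs_mul, Real.abs_cos_int_mul_pi, one_mul,
      abs_of_pos (Real.cosh_pos _)]
  have hcosh_ge : ((b + 1) / (b - 1)) ^ L / 2 ≤ Real.cosh ((L : ℤ) * u) := by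
    have h1 : Real.exp ((L : ℝ) * u) = ((b + 1) / (b - 1)) ^ L := by
      rw [← heu, ← Real.exp_nat_mul]
    have h2 : Real.exp ((L : ℝ) * u) / 2 ≤ Real.cosh ((L : ℝ) * u) := by
      rw [Real.cosh_eq]
      have := (Real.exp_pos (-((L : ℝ) * u))).le
      linarith
    rw [← h1]
    push_cast
    linarith
  have hpow : 0 < ((b + 1) / (b - 1)) ^ L := by positivity
  have habsD_pos : 0 < |D| := by
    rw [habsD]; exact Real.cosh_pos _
  have hDne : D ≠ 0 := by
    intro h
    rw [h, abs_zero] at habsD_pos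
    exact lt_irrefl _ habsD_pos
  refine ⟨hDne, ?_, ?_, ?_⟩
  · have : (2 * (0:ℝ) - (b ^ 2 + 1)) / (b ^ 2 - 1) = -(b ^ 2 + 1) / (b ^ 2 - 1) := by ring
    rw [this, ← hD, neg_div, div_self hDne]
  · intro x hx1 hx2
    set s : ℝ := (2 * x - (b ^ 2 + 1)) / (b ^ 2 - 1) with hs
    have hs1 : -1 ≤ s := by
      rw [hs, le_div_iff₀ hbsq]
      nlinarith
    have hs2 : s ≤ 1 := by
      rw [hs, div_le_one hbsq]
      nlinarith
    have hT := abs_T_le_one hs1 hs2 (L : ℤ)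
    rw [abs_div, abs_neg]
    rw [div_le_iff₀ habsD_pos, inv_mul_cancel₀ (ne_of_gt habsD_pos)]
    exact hT
  · have hinv : |D|⁻¹ ≤ (((b + 1) / (b - 1)) ^ L / 2)⁻¹ := by
      apply inv_anti₀ (by positivity)
      rw [habsD]; exact hcosh_ge
    have hA : (((b + 1) / (b - 1)) ^ L)⁻¹ = ((b - 1) / (b + 1)) ^ L := by
      rw [← inv_pow, inv_div]
    have : (((b + 1) / (b - 1)) ^ L / 2)⁻¹ = 2 * ((b - 1) / (b + 1)) ^ L := by
      rw [inv_div, div_eq_mul_inv, hA]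
    rw [this] at hinv
    exact hinv
end

section
/- Let b > 1 be a real number, L ≥ 1 an integer, and let a_0, a_1, …, a_L be the coefficients of the polynomial P_L(x) = −T_L((2x−(b²+1))/(b²−1)) / T_L(−(b²+1)/(b²−1)) (with a_k = 0 for k > L), and set ε = |T_L(−(b²+1)/(b²−1))|^{−1}. Let N > 0 and c > 0 be reals, and let p > 0 be a real with 1 ≤ p·c ≤ b². If X is a Poisson random variable with rate N·p (i.e., ℙ(X = k) = e^{−Np}(Np)^k/k! for k ∈ ℕ), then the estimator S̃ = 1 + a_X · c^X · X! / N^X satisfies E[S̃] = 1 + e^{−Np} · P_L(p·c), and consequently E[S̃] ∈ [1−ε, 1+ε]. -/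
open Polynomial

lemma tsum_coeff_mul_pow (P : Polynomial ℝ) (x : ℝ) :
    ∑' k : ℕ, P.coeff k * x ^ k = P.eval x := by
  rw [tsum_eq_sum (s := Finset.range (P.natDegree + 1)) ?_, Polynomial.eval_eq_sum_range]
  intro k hk
  rw [P.coeff_eq_zero_of_natDegree_lt (by simpa using Finset.mem_range.not.mp hk), zero_mul]

lemma cheb_abs_le (n : ℤ) (y : ℝ) (hy : y ∈ Set.Icc (-1 : ℝ) 1) :
    |(Polynomial.Chebyshev.T ℝ n).eval y| ≤ 1 := by
  obtain ⟨θ, -, rfl⟩ : ∃ θ, θ ∈ Set.Icc 0 Real.pi ∧ Real.cos θ = y :=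
    ⟨Real.arccos y, ⟨Real.arccos_nonneg y, Real.arccos_le_pi y⟩, Real.cos_arccos hy.1 hy.2⟩
  rw [Polynomial.Chebyshev.T_real_cos]
  exact Real.abs_cos_le_one _

/-- Bias computation: with `a_k` the coefficients of the shifted Chebyshev polynomial
`P_L` and `X ~ Poisson(N·p)` (so `ℙ(X = k) = e^{-Np}(Np)^k/k!`), the estimator
`S̃ = 1 + a_X · c^X · X! / N^X` has expectation `1 + e^{-Np}·P_L(p·c)`, which lies in
`[1-ε, 1+ε]` whenever `1 ≤ p·c ≤ b²`, where `ε = |T_L(-(b²+1)/(b²-1))|⁻¹`. -/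
theorem poisson_estimator_bias (L : ℕ) (hL : 1 ≤ L) (b : ℝ) (hb : 1 < b)
    (N c p : ℝ) (hN : 0 < N) (hc : 0 < c) (hp : 0 < p)
    (hpc1 : 1 ≤ p * c) (hpc2 : p * c ≤ b ^ 2) :
    letI d : ℝ := (Polynomial.Chebyshev.T ℝ L).eval (-(b ^ 2 + 1) / (b ^ 2 - 1))
    letI PL : Polynomial ℝ :=
      C (-d⁻¹) * (Polynomial.Chebyshev.T ℝ L).comp
        (C ((b ^ 2 - 1)⁻¹) * (C 2 * X - C (b ^ 2 + 1)))
    letI ε : ℝ := |d|⁻¹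
    (∑' k : ℕ, (Real.exp (-(N * p)) * (N * p) ^ k / (k.factorial : ℝ)) *
        (1 + PL.coeff k * c ^ k * (k.factorial : ℝ) / N ^ k)) =
      1 + Real.exp (-(N * p)) * PL.eval (p * c) ∧
    1 + Real.exp (-(N * p)) * PL.eval (p * c) ∈ Set.Icc (1 - ε) (1 + ε) := by
  set d : ℝ := (Polynomial.Chebyshev.T ℝ L).eval (-(b ^ 2 + 1) / (b ^ 2 - 1)) with hd
  set PL : Polynomial ℝ :=
      C (-d⁻¹) * (Polynomial.Chebyshev.T ℝ L).comp
        (C ((b ^ 2 - 1)⁻¹) * (C 2 * X - C (b ^ 2 + 1))) with hPL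
  set ε : ℝ := |d|⁻¹ with hε
  have hb2 : (0:ℝ) < b ^ 2 - 1 := by nlinarith
  constructor
  · have key : ∀ k : ℕ, (Real.exp (-(N * p)) * (N * p) ^ k / (k.factorial : ℝ)) *
        (1 + PL.coeff k * c ^ k * (k.factorial : ℝ) / N ^ k)
        = Real.exp (-(N * p)) * ((N * p) ^ k / (k.factorial : ℝ))
          + Real.exp (-(N * p)) * (PL.coeff k * (p * c) ^ k) := by
      intro k
      have hfk : ((k.factorial : ℝ)) ≠ 0 := Nat.cast_ne_zero.mpr k.factorial_ne_zero
      have hNk : (N : ℝ) ^ k ≠ 0 := pow_ne_zero _ hN.ne'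
      field_simp
      ring
    rw [tsum_congr key, Summable.tsum_add, tsum_mul_left, tsum_mul_left, tsum_coeff_mul_pow]
    · rw [show (∑' k : ℕ, (N * p) ^ k / (k.factorial : ℝ)) = Real.exp (N * p) by
        rw [Real.exp_eq_exp_ℝ, NormedSpace.exp_eq_tsum_div]]
      rw [← Real.exp_add]
      simp
    · exact (Real.summable_pow_div_factorial (N * p)).mul_left _
    · apply Summable.mul_left
      apply summable_of_ne_finset_zero (s := Finset.range (PL.natDegree + 1))
      intro k hk
      rw [PL.coeff_eq_zero_of_natDegree_lt (by simpa using Finset.mem_range.not.mp hk), zero_mul]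
  · have hbound : |Real.exp (-(N * p)) * PL.eval (p * c)| ≤ ε := by
      have heval : PL.eval (p * c) =
          -d⁻¹ * (Polynomial.Chebyshev.T ℝ L).eval ((b ^ 2 - 1)⁻¹ * (2 * (p * c) - (b ^ 2 + 1))) := by
        rw [hPL]; simp
      have hy : (b ^ 2 - 1)⁻¹ * (2 * (p * c) - (b ^ 2 + 1)) ∈ Set.Icc (-1 : ℝ) 1 := by
        have hinv : (b ^ 2 - 1)⁻¹ * (b ^ 2 - 1) = 1 := inv_mul_cancel₀ hb2.ne'
        have hinvpos : (0:ℝ) < (b ^ 2 - 1)⁻¹ := inv_pos.mpr hb2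
        constructor
        · nlinarith [mul_nonneg hinvpos.le (sub_nonneg.mpr hpc1)]
        · nlinarith [mul_nonneg hinvpos.le (sub_nonneg.mpr hpc2)]
      have hT := cheb_abs_le L _ hy
      have he : Real.exp (-(N * p)) ≤ 1 := Real.exp_le_one_iff.mpr (by nlinarith)
      calc |Real.exp (-(N * p)) * PL.eval (p * c)|
          = Real.exp (-(N * p)) * |PL.eval (p * c)| := by
            rw [abs_mul, abs_of_pos (Real.exp_pos _)]
        _ ≤ 1 * |PL.eval (p * c)| := by
            exact mul_le_mul_of_nonneg_right he (abs_nonneg _)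
        _ = |(-d⁻¹)| * |(Polynomial.Chebyshev.T ℝ L).eval
              ((b ^ 2 - 1)⁻¹ * (2 * (p * c) - (b ^ 2 + 1)))| := by
            rw [one_mul, heval, abs_mul]
        _ ≤ |d|⁻¹ * 1 := by
            rw [abs_neg, abs_inv]
            exact mul_le_mul_of_nonneg_left hT (by positivity)
        _ = ε := mul_one _
    have := abs_le.mp hbound
    constructor <;> linarith [this.1, this.2]
end

section
/- Let b > 1, N > 0, c > 0, p > 0 be reals with p·c ≤ b² and c ≥ 1, let L ≥ 1 be an integer, and let a_0, …, a_L be reals with |a_k| ≤ A for all 0 ≤ k ≤ L. Set λ = N·p. Then ∑_{k=0}^{L} (e^{−λ} λ^k / k!) · (a_k · c^k · k! / N^k)² ≤ A² · ∑_{k=0}^{L} (b² · c · k / N)^k, with the convention 0^0 = 1. -/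
/-- Second-moment (variance) bound from the proof of Theorem 1: for `λ = N·p`,
`∑_{k=0}^{L} (e^{-λ} λ^k / k!) · (a_k · c^k · k! / N^k)² ≤ A² · ∑_{k=0}^{L} (b²·c·k/N)^k`
(with the convention `0^0 = 1`). -/
theorem poisson_estimator_variance_bound (L : ℕ) (hL : 1 ≤ L) (b N c p A : ℝ)
    (hb : 1 < b) (hN : 0 < N) (hc0 : 0 < c) (hc : 1 ≤ c) (hp : 0 < p)
    (hpc : p * c ≤ b ^ 2) (a : ℕ → ℝ) (ha : ∀ k ≤ L, |a k| ≤ A) :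
    ∑ k ∈ Finset.range (L + 1),
        (Real.exp (-(N * p)) * (N * p) ^ k / (k.factorial : ℝ)) *
          (a k * c ^ k * (k.factorial : ℝ) / N ^ k) ^ 2 ≤
      A ^ 2 * ∑ k ∈ Finset.range (L + 1), (b ^ 2 * c * k / N) ^ k := by
  rw [Finset.mul_sum]
  apply Finset.sum_le_sum
  intro k hk
  have hk' : k ≤ L := Finset.mem_range_succ_iff.mp hk
  have hA0 : 0 ≤ A := le_trans (abs_nonneg _) (ha 0 (Nat.zero_le _))
  have hA : (a k) ^ 2 ≤ A ^ 2 := by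
    rw [← sq_abs]
    exact pow_le_pow_left₀ (abs_nonneg _) (ha k hk') 2
  have hfk : (0:ℝ) < (k.factorial : ℝ) := by exact_mod_cast k.factorial_pos
  have hNk : (0:ℝ) < N ^ k := pow_pos hN k
  have hexp : Real.exp (-(N * p)) ≤ 1 := Real.exp_le_one_iff.mpr (by nlinarith)
  have hfact : (k.factorial : ℝ) ≤ (k:ℝ) ^ k := by
    exact_mod_cast Nat.factorial_le_pow k
  have heq : (Real.exp (-(N * p)) * (N * p) ^ k / (k.factorial : ℝ)) *
      (a k * c ^ k * (k.factorial : ℝ) / N ^ k) ^ 2 =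
      (Real.exp (-(N * p)) * (a k) ^ 2 * ((p*c) ^ k * c ^ k * (k.factorial:ℝ))) / N ^ k := by
    field_simp
    ring
  have heq2 : A ^ 2 * (b ^ 2 * c * k / N) ^ k =
      (A ^ 2 * ((b^2) ^ k * c ^ k * (k:ℝ) ^ k)) / N ^ k := by
    rw [div_pow, mul_pow, mul_pow]
    ring
  rw [heq, heq2]
  apply div_le_div_of_nonneg_right ?_ hNk.le |>.trans_eq rfl
  have h1 : Real.exp (-(N * p)) * (a k) ^ 2 ≤ 1 * A ^ 2 :=
    mul_le_mul hexp hA (sq_nonneg _) zero_le_one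
  have h2 : (p*c) ^ k * c ^ k * (k.factorial:ℝ) ≤ (b^2) ^ k * c ^ k * (k:ℝ) ^ k := by
    apply mul_le_mul
    · apply mul_le_mul_of_nonneg_right _ (pow_nonneg hc0.le k)
      exact pow_le_pow_left₀ (by positivity) hpc k
    · exact hfact
    · exact hfk.le
    · positivity
  calc Real.exp (-(N * p)) * (a k) ^ 2 * ((p*c) ^ k * c ^ k * (k.factorial:ℝ))
      ≤ (1 * A ^ 2) * ((b^2) ^ k * c ^ k * (k:ℝ) ^ k) := by
        apply mul_le_mul h1 h2 (by positivity) (by positivity)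
    _ = A ^ 2 * ((b^2) ^ k * c ^ k * (k:ℝ) ^ k) := by ring
end

section
/- Let n ≥ 1 be an integer, let p : {1,…,n} → ℝ be a probability distribution (p_i ≥ 0 and ∑_i p_i = 1), let ε > 0, and let Π : {1,…,n} → ℝ satisfy Π_i ≥ 1/n for all i and ∑_{i=1}^{n} |p_i − Π_i| ≤ ε/2. Let S = #{i : p_i ≠ 0} denote the support size of p. Then |∑_{i=1}^{n} p_i / Π_i − S| ≤ (ε/2) · n. In other words, the expectation over i ∼ p of 1/Π_i lies in [S − (ε/2)n, S + (ε/2)n]. -/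
/-- Canonne–Rubinfeld estimator bias: if the predictor `Q` is pointwise at least `1/n`
and within `ℓ₁` distance `ε/2` of the true distribution `p`, then `∑ i, p i / Q i`
approximates the support size `S` up to additive error `(ε/2)·n`. -/
theorem canonne_rubinfeld_bias (n : ℕ) (hn : 1 ≤ n) (p Q : Fin n → ℝ) (ε : ℝ)
    (hε : 0 < ε) (hp0 : ∀ i, 0 ≤ p i) (hp1 : ∑ i, p i = 1)
    (hQ : ∀ i, 1 / (n : ℝ) ≤ Q i)
    (hTV : ∑ i, |p i - Q i| ≤ ε / 2) :
    |∑ i, p i / Q i -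
        ((Finset.univ.filter (fun i => p i ≠ 0)).card : ℝ)| ≤ ε / 2 * n := by
  have hn0 : (0:ℝ) < n := by positivity
  have hQpos : ∀ i, 0 < Q i := fun i => lt_of_lt_of_le (by positivity) (hQ i)
  have hcard : ((Finset.univ.filter (fun i => p i ≠ 0)).card : ℝ)
      = ∑ i, (if p i ≠ 0 then (1:ℝ) else 0) := by
    rw [Finset.card_filter]
    push_cast
    rfl
  rw [hcard, ← Finset.sum_sub_distrib]
  calc |∑ i, (p i / Q i - if p i ≠ 0 then (1:ℝ) else 0)|
      ≤ ∑ i, |p i / Q i - if p i ≠ 0 then (1:ℝ) else 0| :=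
        Finset.abs_sum_le_sum_abs _ _
    _ ≤ ∑ i, (n : ℝ) * |p i - Q i| := by
        apply Finset.sum_le_sum
        intro i _
        by_cases h : p i = 0
        · simp [h]
          positivity
        · rw [if_pos h]
          have : p i / Q i - 1 = (p i - Q i) / Q i := by
            rw [eq_div_iff (ne_of_gt (hQpos i)), sub_mul, div_mul_cancel₀ _ (ne_of_gt (hQpos i)), one_mul]
          rw [this, abs_div, abs_of_pos (hQpos i), div_le_iff₀ (hQpos i)]
          rw [mul_assoc]
          have h1 : 1 ≤ (n:ℝ) * Q i := by
            have := hQ i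
            rw [div_le_iff₀ hn0] at this
            linarith [this]
          nlinarith [abs_nonneg (p i - Q i)]
    _ = (n:ℝ) * ∑ i, |p i - Q i| := by rw [Finset.mul_sum]
    _ ≤ (n:ℝ) * (ε/2) := by
        apply mul_le_mul_of_nonneg_left hTV (le_of_lt hn0)
    _ = ε/2 * n := by ring
end
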